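/- Let X₁ and X₂ be compact metric spaces, Y₂ a closed subset of X₂, n ≥ 1, and τ : Y₂ → X₁ a map such that for every continuous function f : X₁ → Mₙ(ℂ) the map y ↦ f(τ(y)) is continuous on Y₂. Then there exists a compact metrizable topological space Z such that the pullback algebra P := {(f, g) ∈ C(X₁, Mₙ(ℂ)) × C(X₂, Mₙ(ℂ)) : g(y) = f(τ(y)) for all y ∈ Y₂} is isomorphic, as a unital star-algebra over ℂ, to C(Z, Mₙ(ℂ)). -/

import Mathlib

open TopologicalSpace Set

set_option linter.unusedSectionVars false

namespace Stmt0Aux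

variable {X₁ X₂ : Type} [MetricSpace X₁] [MetricSpace X₂]
  [CompactSpace X₁] [CompactSpace X₂]

variable (Y₂ : Set X₂) (τ : Y₂ → X₁)

open Classical in
/-- The gluing map on the disjoint union. -/
noncomputable def phi : X₁ ⊕ X₂ → X₁ ⊕ X₂ :=
  Sum.elim Sum.inl fun y => if h : y ∈ Y₂ then Sum.inl (τ ⟨y, h⟩) else Sum.inr y

/-- The gluing setoid. -/
noncomputable def S : Setoid (X₁ ⊕ X₂) := Setoid.ker (phi Y₂ τ)

/-- The glued space. -/
abbrev Z := Quotient (S Y₂ τ)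

variable {Y₂ τ}

lemma phi_inl (x : X₁) : phi Y₂ τ (Sum.inl x) = Sum.inl x := rfl

lemma phi_inr_mem (y : X₂) (h : y ∈ Y₂) : phi Y₂ τ (Sum.inr y) = Sum.inl (τ ⟨y, h⟩) := by
  simp [phi, h]

lemma phi_inr_not_mem (y : X₂) (h : y ∉ Y₂) : phi Y₂ τ (Sum.inr y) = Sum.inr y := by
  simp [phi, h]

lemma phi_shape (a : X₁ ⊕ X₂) :
    (∃ x, phi Y₂ τ a = Sum.inl x) ∨ ∃ y, y ∉ Y₂ ∧ phi Y₂ τ a = Sum.inr y := by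
  rcases a with x | y
  · exact Or.inl ⟨x, rfl⟩
  · by_cases h : y ∈ Y₂
    · exact Or.inl ⟨τ ⟨y, h⟩, phi_inr_mem y h⟩
    · exact Or.inr ⟨y, h, phi_inr_not_mem y h⟩

lemma elim_phi {A : Type*} (f : X₁ → A) (g : X₂ → A)
    (hfg : ∀ y : Y₂, g y = f (τ y)) (a : X₁ ⊕ X₂) :
    Sum.elim f g (phi Y₂ τ a) = Sum.elim f g a := by
  rcases a with x | y
  · rfl
  · by_cases h : y ∈ Y₂
    · rw [phi_inr_mem y h]
      exact (hfg ⟨y, h⟩).symm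
    · rw [phi_inr_not_mem y h]

/-- The compatible scalar pairs. -/
abbrev V : Type :=
  {p : C(X₁, ℝ) × C(X₂, ℝ) // ∀ y : Y₂, p.2 y = p.1 (τ y)}

variable (Y₂ τ) in
/-- Evaluation of a compatible pair on the disjoint union. -/
def ev (p : V (Y₂ := Y₂) (τ := τ)) : X₁ ⊕ X₂ → ℝ :=
  Sum.elim ⇑p.1.1 ⇑p.1.2

lemma ev_phi (p : V (Y₂ := Y₂) (τ := τ)) (a : X₁ ⊕ X₂) :
    ev Y₂ τ p (phi Y₂ τ a) = ev Y₂ τ p a :=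
  elim_phi _ _ p.2 a

/-- Separation of points by compatible pairs. -/
lemma sep (hY₂ : IsClosed Y₂)
    (hc : ∀ f : C(X₁, ℝ), Continuous fun y : Y₂ => f (τ y))
    (a b : X₁ ⊕ X₂)
    (h : ∀ p : V (Y₂ := Y₂) (τ := τ), ev Y₂ τ p a = ev Y₂ τ p b) :
    phi Y₂ τ a = phi Y₂ τ b := by
  have h' : ∀ p : V (Y₂ := Y₂) (τ := τ),
      ev Y₂ τ p (phi Y₂ τ a) = ev Y₂ τ p (phi Y₂ τ b) := by
    intro p; rw [ev_phi, ev_phi]; exact h p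
  -- key sub-lemma: a pair separating an "inl" point from another point
  by_contra hne
  -- case analysis on the shapes of `phi a` and `phi b`
  have key : ∀ u v : X₁ ⊕ X₂, u ≠ v →
      ((∃ x, u = Sum.inl x) ∨ ∃ y, y ∉ Y₂ ∧ u = Sum.inr y) →
      ((∃ x, v = Sum.inl x) ∨ ∃ y, y ∉ Y₂ ∧ v = Sum.inr y) →
      (∀ p : V (Y₂ := Y₂) (τ := τ), ev Y₂ τ p u = ev Y₂ τ p v) → False := by
    -- first, a generic fact: separate inl x from inl x'
    have inl_inl : ∀ x x' : X₁, x ≠ x' →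
        (∀ p : V (Y₂ := Y₂) (τ := τ),
          ev Y₂ τ p (Sum.inl x) = ev Y₂ τ p (Sum.inl x')) → False := by
      intro x x' hxx hpp
      set f : C(X₁, ℝ) := ⟨fun t => dist t x, (continuous_id.dist continuous_const)⟩ with hf
      have hfc : Continuous fun y : Y₂ => f (τ y) := hc f
      obtain ⟨g, hg⟩ := ContinuousMap.exists_restrict_eq (Y := ℝ) hY₂
        ⟨fun y : Y₂ => f (τ y), hfc⟩
      have hgy : ∀ y : Y₂, g y = f (τ y) := fun y => by simpa using ContinuousMap.congr_fun hg y
      have := hpp ⟨(f, g), hgy⟩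
      simp only [ev, Sum.elim_inl] at this
      have h0 : f x = 0 := dist_self x
      have h1 : f x' ≠ 0 := by
        simp only [hf, ContinuousMap.coe_mk]
        exact fun hh => hxx (dist_eq_zero.mp hh).symm
      exact h1 (by rw [← this, h0])
    -- separate inl x from inr y with y ∉ Y₂
    have inl_inr : ∀ (x : X₁) (y : X₂), y ∉ Y₂ →
        (∀ p : V (Y₂ := Y₂) (τ := τ),
          ev Y₂ τ p (Sum.inl x) = ev Y₂ τ p (Sum.inr y)) → False := by
      intro x y hy hpp
      obtain ⟨g, hg0, hg1, -⟩ := exists_continuous_zero_one_of_isClosed hY₂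
        (isClosed_singleton (x := y)) (by simpa [Set.disjoint_singleton_right] using hy)
      have hcomp : ∀ y' : Y₂, g y' = (0 : C(X₁, ℝ)) (τ y') := by
        intro y'; simpa using hg0 y'.2
      have := hpp ⟨((0 : C(X₁, ℝ)), g), hcomp⟩
      simp only [ev, Sum.elim_inl, Sum.elim_inr] at this
      have : (0 : ℝ) = 1 := by
        simpa using this.trans (hg1 (mem_singleton y))
      norm_num at this
    intro u v huv hu hv hpp
    rcases hu with ⟨x, rfl⟩ | ⟨y, hy, rfl⟩
    · rcases hv with ⟨x', rfl⟩ | ⟨y', hy', rfl⟩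
      · exact inl_inl x x' (by simpa using huv) hpp
      · exact inl_inr x y' hy' hpp
    · rcases hv with ⟨x', rfl⟩ | ⟨y', hy', rfl⟩
      · exact inl_inr x' y hy fun p => (hpp p).symm
      · -- inr y vs inr y', both not in Y₂
        have hyy : y ≠ y' := by simpa using huv
        obtain ⟨g, hg0, hg1, -⟩ := exists_continuous_zero_one_of_isClosed
          (hY₂.union (isClosed_singleton (x := y'))) (isClosed_singleton (x := y))
          (by
            rw [Set.disjoint_singleton_right]
            simp only [Set.mem_union, Set.mem_singleton_iff]
            push_neg
            exact ⟨hy, hyy⟩)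
        have hcomp : ∀ y'' : Y₂, g y'' = (0 : C(X₁, ℝ)) (τ y'') := by
          intro y''; simpa using hg0 (Set.mem_union_left _ y''.2)
        have := hpp ⟨((0 : C(X₁, ℝ)), g), hcomp⟩
        simp only [ev, Sum.elim_inr] at this
        have h1 : g y = 1 := hg1 (mem_singleton y)
        have h0 : g y' = 0 := hg0 (Set.mem_union_right _ (mem_singleton y'))
        rw [h1, h0] at this
        norm_num at this
  exact key _ _ hne (phi_shape a) (phi_shape b) h'

end Stmt0Aux

namespace Stmt0Aux

variable {X₁ X₂ : Type} [MetricSpace X₁] [MetricSpace X₂]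
  [CompactSpace X₁] [CompactSpace X₂] {Y₂ : Set X₂} {τ : Y₂ → X₁}

lemma continuous_ev_const (a : X₁ ⊕ X₂) :
    Continuous fun p : V (Y₂ := Y₂) (τ := τ) => ev Y₂ τ p a := by
  rcases a with x | y
  · exact (continuous_eval_const x).comp (continuous_fst.comp continuous_subtype_val)
  · exact (continuous_eval_const y).comp (continuous_snd.comp continuous_subtype_val)

lemma metrizable (hY₂ : IsClosed Y₂)
    (hc : ∀ f : C(X₁, ℝ), Continuous fun y : Y₂ => f (τ y)) :
    TopologicalSpace.MetrizableSpace (Z Y₂ τ) := by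
  have hne : Nonempty (V (Y₂ := Y₂) (τ := τ)) := ⟨⟨(0, 0), fun y => by simp⟩⟩
  obtain ⟨u, hu⟩ := TopologicalSpace.exists_dense_seq (V (Y₂ := Y₂) (τ := τ))
  have wd : ∀ k : ℕ, ∀ a b : X₁ ⊕ X₂, phi Y₂ τ a = phi Y₂ τ b →
      ev Y₂ τ (u k) a = ev Y₂ τ (u k) b := by
    intro k a b h'
    rw [← ev_phi (u k) a, h', ev_phi]
  set e : Z Y₂ τ → ℕ → ℝ := fun z k => Quotient.lift (ev Y₂ τ (u k)) (wd k) z with he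
  have hecont : Continuous e := by
    rw [continuous_pi_iff]
    intro k
    exact Continuous.quotient_lift
      ((u k).1.1.continuous.sumElim (u k).1.2.continuous) (wd k)
  have heinj : Function.Injective e := by
    intro z z' h
    induction z using Quotient.ind
    induction z' using Quotient.ind
    rename_i a b
    have hall : ∀ p : V (Y₂ := Y₂) (τ := τ), ev Y₂ τ p a = ev Y₂ τ p b := by
      have heq := Continuous.ext_on hu (continuous_ev_const a) (continuous_ev_const b)
        (by rintro p ⟨k, rfl⟩; exact congrFun h k)
      exact fun p => congrFun heq p
    exact Quotient.sound (sep hY₂ hc a b hall)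
  exact ((hecont.isClosedEmbedding heinj).toIsEmbedding).metrizableSpace

end Stmt0Aux

set_option maxHeartbeats 1000000 in
set_option synthInstance.maxHeartbeats 200000 in
open Stmt0Aux in
theorem stmt_0
    (n : ℕ) (hn : 1 ≤ n)
    (X₁ X₂ : Type) [MetricSpace X₁] [MetricSpace X₂]
    [CompactSpace X₁] [CompactSpace X₂]
    (Y₂ : Set X₂) (hY₂ : IsClosed Y₂)
    (τ : Y₂ → X₁)
    (hτ : ∀ f : C(X₁, Matrix (Fin n) (Fin n) ℂ),
      Continuous fun y : Y₂ => f (τ y))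
    (P : StarSubalgebra ℂ
      (C(X₁, Matrix (Fin n) (Fin n) ℂ) × C(X₂, Matrix (Fin n) (Fin n) ℂ)))
    (hP : ∀ p : C(X₁, Matrix (Fin n) (Fin n) ℂ) × C(X₂, Matrix (Fin n) (Fin n) ℂ),
      p ∈ P ↔ ∀ y : Y₂, p.2 (y : X₂) = p.1 (τ y)) :
    ∃ (Z : Type) (_ : TopologicalSpace Z) (_ : CompactSpace Z)
      (_ : TopologicalSpace.MetrizableSpace Z),
      Nonempty (P ≃⋆ₐ[ℂ] C(Z, Matrix (Fin n) (Fin n) ℂ)) := by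
  classical
  have hc : ∀ f : C(X₁, ℝ), Continuous fun y : Y₂ => f (τ y) := by
    intro f
    set i : Fin n := ⟨0, hn⟩ with hi
    set F : C(X₁, Matrix (Fin n) (Fin n) ℂ) :=
      ⟨fun x => (f x : ℂ) • (1 : Matrix (Fin n) (Fin n) ℂ),
        ((Complex.continuous_ofReal.comp f.continuous).smul continuous_const)⟩ with hF
    have h1 := hτ F
    have h2 : Continuous fun y : Y₂ => ((F (τ y)) i i).re :=
      Complex.continuous_re.comp (((continuous_apply i).comp ((continuous_apply i).comp h1)))
    convert h2 using 1
    funext y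
    simp [hF, Matrix.smul_apply, Matrix.one_apply_eq]
  refine ⟨Stmt0Aux.Z Y₂ τ, inferInstance, inferInstance, Stmt0Aux.metrizable hY₂ hc, ?_⟩
  set M := Matrix (Fin n) (Fin n) ℂ with hM
  set q₁ : C(X₁, Stmt0Aux.Z Y₂ τ) :=
    ⟨fun x => ⟦Sum.inl x⟧, continuous_quotient_mk'.comp continuous_inl⟩ with hq₁
  set q₂ : C(X₂, Stmt0Aux.Z Y₂ τ) :=
    ⟨fun y => ⟦Sum.inr y⟧, continuous_quotient_mk'.comp continuous_inr⟩ with hq₂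
  have hq : ∀ y : Y₂, q₂ (y : X₂) = q₁ (τ y) := by
    intro y
    refine Quotient.sound ?_
    show phi Y₂ τ (Sum.inr (y : X₂)) = phi Y₂ τ (Sum.inl (τ y))
    rw [phi_inr_mem (y : X₂) y.2, phi_inl]
  set Θ : C(Stmt0Aux.Z Y₂ τ, M) →⋆ₐ[ℂ] C(X₁, M) × C(X₂, M) :=
    (ContinuousMap.compStarAlgHom' ℂ M q₁).prod (ContinuousMap.compStarAlgHom' ℂ M q₂) with hΘ
  have hΘapp : ∀ h : C(Stmt0Aux.Z Y₂ τ, M), Θ h = (h.comp q₁, h.comp q₂) := fun h => rfl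
  have hmem : ∀ h : C(Stmt0Aux.Z Y₂ τ, M), Θ h ∈ P := by
    intro h
    rw [hP]
    intro y
    show h (q₂ (y : X₂)) = h (q₁ (τ y))
    rw [hq y]
  set Θ' := Θ.codRestrict P hmem with hΘ'
  have hinj : Function.Injective Θ' := by
    rw [StarAlgHom.injective_codRestrict]
    intro h h' hhh
    rw [hΘapp, hΘapp, Prod.ext_iff] at hhh
    refine ContinuousMap.ext fun z => ?_
    induction z using Quotient.ind
    rename_i a
    rcases a with x | y
    · exact ContinuousMap.congr_fun hhh.1 x
    · exact ContinuousMap.congr_fun hhh.2 y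
  have hsurj : Function.Surjective Θ' := by
    rintro ⟨p, hp⟩
    have compat : ∀ y : Y₂, p.2 (y : X₂) = p.1 (τ y) := (hP p).mp hp
    have wd : ∀ a b : X₁ ⊕ X₂, phi Y₂ τ a = phi Y₂ τ b →
        Sum.elim ⇑p.1 ⇑p.2 a = Sum.elim ⇑p.1 ⇑p.2 b := by
      intro a b h'
      rw [← elim_phi ⇑p.1 ⇑p.2 compat a, h', elim_phi ⇑p.1 ⇑p.2 compat b]
    refine ⟨⟨Quotient.lift (Sum.elim ⇑p.1 ⇑p.2) wd,
      Continuous.quotient_lift (p.1.continuous.sumElim p.2.continuous) wd⟩, ?_⟩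
    apply Subtype.ext
    show Θ _ = p
    rw [hΘapp]
    exact Prod.ext (ContinuousMap.ext fun x => rfl) (ContinuousMap.ext fun y => rfl)
  exact ⟨(StarAlgEquiv.ofBijective Θ' ⟨hinj, hsurj⟩).symm⟩
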